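/- For every constant C with √2 - 1 < C ≤ √2 + 1, the open disc {w ∈ ℂ : |w - C| < 1 - |√2 - C|} is contained in the lune region {w ∈ ℂ : |w² - 1| < 2|w|}. -/

import Mathlib

open Complex

theorem stmt_9 (C : ℝ) (h1 : Real.sqrt 2 - 1 < C) (h2 : C ≤ Real.sqrt 2 + 1) :
    ∀ w : ℂ, ‖w - (C:ℂ)‖ < 1 - |Real.sqrt 2 - C| →
      ‖w ^ 2 - 1‖ < 2 * ‖w‖ := by
  intro w hw
  set s := Real.sqrt 2 with hs
  have hs2 : s ^ 2 = 2 := Real.sq_sqrt (by norm_num)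
  have hs0 : 0 ≤ s := Real.sqrt_nonneg 2
  have hs1 : 1 < s := by nlinarith
  -- |w - 1| < s
  have hC1 : ‖(C:ℂ) - 1‖ = |C - 1| := by
    rw [show ((C:ℂ) - 1) = ((C - 1 : ℝ) : ℂ) by push_cast; ring, Complex.norm_real, Real.norm_eq_abs]
  have ha : ‖w - 1‖ < s := by
    have t1 : ‖w - 1‖ ≤ ‖w - (C:ℂ)‖ + ‖(C:ℂ) - 1‖ :=
      norm_sub_le_norm_sub_add_norm_sub w (C:ℂ) 1
    have t2 : |C - 1| ≤ |C - s| + |s - 1| := abs_sub_le C s 1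
    have t3 : |C - s| = |s - C| := abs_sub_comm C s
    have t4 : |s - 1| = s - 1 := abs_of_pos (by linarith)
    rw [hC1] at t1
    linarith
  -- s < |w + 1|
  have hb : s < ‖w + 1‖ := by
    have hC2 : ‖(C:ℂ) + 1‖ = C + 1 := by
      rw [show ((C:ℂ) + 1) = ((C + 1 : ℝ) : ℂ) by push_cast; ring, Complex.norm_real, Real.norm_eq_abs]
      exact abs_of_pos (by nlinarith)
    have t1 : ‖(C:ℂ) - (-1)‖ ≤ ‖(C:ℂ) - w‖ + ‖w - (-1)‖ :=
      norm_sub_le_norm_sub_add_norm_sub (C:ℂ) w (-1)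
    have e1 : (C:ℂ) - (-1) = (C:ℂ) + 1 := by ring
    have e2 : w - (-1) = w + 1 := by ring
    have e3 : ‖(C:ℂ) - w‖ = ‖w - (C:ℂ)‖ := norm_sub_rev _ _
    rw [e1, e2, e3, hC2] at t1
    have t5 : s - C ≤ |s - C| := le_abs_self _
    linarith
  -- parallelogram law
  have par : ‖w - 1‖ ^ 2 + ‖w + 1‖ ^ 2
      = 2 * ‖w‖ ^ 2 + 2 := by
    rw [Complex.sq_norm, Complex.sq_norm, Complex.sq_norm]
    simp [Complex.normSq_apply, Complex.add_re, Complex.sub_re, Complex.add_im,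
      Complex.sub_im, Complex.one_re, Complex.one_im]
    ring
  have key : ‖w ^ 2 - 1‖ = ‖w - 1‖ * ‖w + 1‖ := by
    rw [show w ^ 2 - 1 = (w - 1) * (w + 1) by ring, norm_mul]
  rw [key]
  have ha0 : 0 ≤ ‖w - 1‖ := norm_nonneg _
  have hb0 : 0 ≤ ‖w + 1‖ := norm_nonneg _
  have hr0 : 0 ≤ ‖w‖ := norm_nonneg _
  nlinarith [mul_pos (sub_pos.mpr ha) (sub_pos.mpr hb),
    mul_nonneg ha0 hb0, sq_nonneg (‖w - 1‖ - ‖w + 1‖),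
    sq_nonneg (2 * ‖w‖ + ‖w - 1‖ * ‖w + 1‖)]
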